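/- Let h(u,v,w) = u·v·w·((u³+v³+w³)³ − 27u³v³w³) ∈ ℂ[u,v,w] be the defining polynomial of the Hesse line arrangement, let h'(u,v,w) = h(vw, uw, uv), and set ℓ₁ = x+ωy+ω²z, ℓ₂ = x+ω²y+ωz, ℓ₃ = x+y+z. Then there exists a nonzero constant c ∈ ℂ such that ∏_{j=1}^{12} f_j(1)(x,y,z) = c · h'(ℓ₁, ℓ₂, ℓ₃) = c · h(ℓ₂ℓ₃, ℓ₁ℓ₃, ℓ₁ℓ₂) in ℂ[x,y,z]; that is, the degree-24 non-reduced Hesse conic multiarrangement at λ = 1 is, up to a linear change of coordinates, the pull-back of the Hesse line arrangement under the standard Cremona map (u:v:w) ↦ (vw:uw:uv). -/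
import Mathlib


open MvPolynomial

set_option maxHeartbeats 1000000

/-- The twelve conics `Q_j(λ) : f_j(λ) = 0` of the Hesse arrangement of conics,
as quadratic forms in `ℂ[x,y,z]` (variables `X 0 = x`, `X 1 = y`, `X 2 = z`),
depending on the parameter `lam = λ` and on a primitive cube root of unity `ω`.
The index `j : Fin 12` corresponds to `f_{j+1}(λ)` of the paper. -/
noncomputable def hesseConic (ω lam : ℂ) : Fin 12 → MvPolynomial (Fin 3) ℂ :=
  ![X 0 ^ 2 + C (lam + 1) * (C ω * (X 0 * X 1) + C (ω ^ 2) * (X 0 * X 2) + X 1 * X 2)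
      + C (ω ^ 2) * X 1 ^ 2 + C ω * X 2 ^ 2,
    X 0 ^ 2 + C (lam + 1) * (C (ω ^ 2) * (X 0 * X 1) + C ω * (X 0 * X 2) + X 1 * X 2)
      + C ω * X 1 ^ 2 + C (ω ^ 2) * X 2 ^ 2,
    X 0 * X 1 - C lam * X 2 ^ 2,
    X 0 ^ 2 + C (ω * lam + 1) * (X 0 * X 1 + C ω * (X 0 * X 2) + C ω * (X 1 * X 2))
      + X 1 ^ 2 + C (ω ^ 2) * X 2 ^ 2,
    X 0 ^ 2 + C (ω ^ 2 * lam + 1) *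
        (X 0 * X 1 + C (ω ^ 2) * (X 0 * X 2) + C (ω ^ 2) * (X 1 * X 2))
      + X 1 ^ 2 + C ω * X 2 ^ 2,
    X 0 ^ 2 + C (ω * lam + ω ^ 2) * (X 0 * X 1 + X 1 * X 2 + C ω * (X 0 * X 2))
      + C ω * X 1 ^ 2 + X 2 ^ 2,
    - (C lam) * X 1 ^ 2 + X 0 * X 2,
    X 0 ^ 2 + C (ω ^ 2 * lam + ω) * (X 0 * X 1 + X 1 * X 2 + C (ω ^ 2) * (X 0 * X 2))
      + C (ω ^ 2) * X 1 ^ 2 + X 2 ^ 2,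
    X 0 ^ 2 + C (lam + ω ^ 2) * (X 0 * X 1 + X 0 * X 2 + C (ω ^ 2) * (X 1 * X 2))
      + C ω * X 1 ^ 2 + C ω * X 2 ^ 2,
    X 0 ^ 2 + C (lam + ω) * (X 0 * X 1 + X 0 * X 2 + C ω * (X 1 * X 2))
      + C (ω ^ 2) * (X 1 ^ 2 + X 2 ^ 2),
    C lam * X 0 ^ 2 - X 1 * X 2,
    X 0 ^ 2 + C (lam + 1) * (X 0 * X 1 + X 0 * X 2 + X 1 * X 2) + X 1 ^ 2 + X 2 ^ 2]

/-- Representative vectors in `ℂ³` of the nine points `p_k(λ)` of `𝒫₉(λ)`;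
the index `k : Fin 9` corresponds to `p_{k+1}(λ)` of the paper. -/
noncomputable def hessePoint (ω lam : ℂ) : Fin 9 → Fin 3 → ℂ :=
  ![![lam, 1, 1], ![1, lam, 1], ![1, 1, lam],
    ![lam, ω, ω ^ 2], ![ω ^ 2, lam, ω], ![ω, ω ^ 2, lam],
    ![lam, ω ^ 2, ω], ![ω, lam, ω ^ 2], ![ω ^ 2, ω, lam]]

/-- The set `Λ = ℂ ∖ {−2, −2ω, −2ω², 0, 1, ω, ω²}` of regular parameter values. -/
def hesseLambda (ω : ℂ) : Set ℂ :=
  {lam | lam ∉ ({-2, -2 * ω, -2 * ω ^ 2, 0, 1, ω, ω ^ 2} : Set ℂ)}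

/-- The defining polynomial `h(u,v,w) = uvw((u³+v³+w³)³ − 27u³v³w³)` of the Hesse line
arrangement, evaluated on arbitrary arguments `u, v, w`. -/
noncomputable def hesseLinePoly (u v w : MvPolynomial (Fin 3) ℂ) :
    MvPolynomial (Fin 3) ℂ :=
  u * v * w * ((u ^ 3 + v ^ 3 + w ^ 3) ^ 3 - 27 * (u ^ 3 * v ^ 3 * w ^ 3))

set_option maxHeartbeats 4000000 in
/-- Let `h` be the defining polynomial of the Hesse line arrangement,
`h'(u,v,w) = h(vw, uw, uv)` its Cremona pull-back, and `ℓ₁ = x+ωy+ω²z`,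
`ℓ₂ = x+ω²y+ωz`, `ℓ₃ = x+y+z`. Then there is a nonzero constant `c ∈ ℂ` with
`∏_{j=1}^{12} f_j(1) = c·h'(ℓ₁,ℓ₂,ℓ₃) = c·h(ℓ₂ℓ₃, ℓ₁ℓ₃, ℓ₁ℓ₂)` in `ℂ[x,y,z]`:
the degree-24 non-reduced Hesse conic multiarrangement at `λ = 1` is, up to a linear
change of coordinates, the pull-back of the Hesse line arrangement under the standard
Cremona map `(u:v:w) ↦ (vw:uw:uv)`. -/
theorem stmt_17 (ω : ℂ) (hω : ω ^ 2 + ω + 1 = 0) :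
    ∃ c : ℂ, c ≠ 0 ∧
      (∏ j : Fin 12, hesseConic ω 1 j) =
        C c *
          hesseLinePoly
            ((X 0 + C (ω ^ 2) * X 1 + C ω * X 2) * (X 0 + X 1 + X 2))
            ((X 0 + C ω * X 1 + C (ω ^ 2) * X 2) * (X 0 + X 1 + X 2))
            ((X 0 + C ω * X 1 + C (ω ^ 2) * X 2) *
              (X 0 + C (ω ^ 2) * X 1 + C ω * X 2)) := by
  refine ⟨(729:ℂ)⁻¹, by norm_num, ?_⟩
  have hC : (C ω : MvPolynomial (Fin 3) ℂ) ^ 2 + C ω + 1 = 0 := by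
    have h0 := congrArg (fun t : ℂ => (C t : MvPolynomial (Fin 3) ℂ)) hω
    simpa only [map_add, map_pow, map_one, map_zero] using h0
  have hc : (729 : MvPolynomial (Fin 3) ℂ) * C ((729:ℂ)⁻¹) = 1 := by
    rw [show (729 : MvPolynomial (Fin 3) ℂ) = C (729:ℂ) from (map_ofNat _ _).symm, ← map_mul]
    norm_num
  simp only [hesseConic, hesseLinePoly, Fin.prod_univ_succ, Fin.prod_univ_zero, mul_one,
    Matrix.cons_val_zero, Matrix.cons_val_succ, map_add, map_mul, map_pow, map_one]
  set A1 : MvPolynomial (Fin 3) ℂ := X 0 ^ 2 + (1 + 1) * (C ω * (X 0 * X 1) + C ω ^ 2 * (X 0 * X 2) + X 1 * X 2) + C ω ^ 2 * X 1 ^ 2 + C ω * X 2 ^ 2 with h1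
  set A2 : MvPolynomial (Fin 3) ℂ := X 0 ^ 2 + (1 + 1) * (C ω ^ 2 * (X 0 * X 1) + C ω * (X 0 * X 2) + X 1 * X 2) + C ω * X 1 ^ 2 + C ω ^ 2 * X 2 ^ 2 with h2
  set A3 : MvPolynomial (Fin 3) ℂ := X 0 * X 1 - 1 * X 2 ^ 2 with h3
  set A4 : MvPolynomial (Fin 3) ℂ := X 0 ^ 2 + (C ω + 1) * (X 0 * X 1 + C ω * (X 0 * X 2) + C ω * (X 1 * X 2)) + X 1 ^ 2 + C ω ^ 2 * X 2 ^ 2 with h4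
  set A5 : MvPolynomial (Fin 3) ℂ := X 0 ^ 2 + (C ω ^ 2 + 1) * (X 0 * X 1 + C ω ^ 2 * (X 0 * X 2) + C ω ^ 2 * (X 1 * X 2)) + X 1 ^ 2 + C ω * X 2 ^ 2 with h5
  set A6 : MvPolynomial (Fin 3) ℂ := X 0 ^ 2 + (C ω + C ω ^ 2) * (X 0 * X 1 + X 1 * X 2 + C ω * (X 0 * X 2)) + C ω * X 1 ^ 2 + X 2 ^ 2 with h6
  set A7 : MvPolynomial (Fin 3) ℂ := -1 * X 1 ^ 2 + X 0 * X 2 with h7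
  set A8 : MvPolynomial (Fin 3) ℂ := X 0 ^ 2 + (C ω ^ 2 + C ω) * (X 0 * X 1 + X 1 * X 2 + C ω ^ 2 * (X 0 * X 2)) + C ω ^ 2 * X 1 ^ 2 + X 2 ^ 2 with h8
  set A9 : MvPolynomial (Fin 3) ℂ := X 0 ^ 2 + (1 + C ω ^ 2) * (X 0 * X 1 + X 0 * X 2 + C ω ^ 2 * (X 1 * X 2)) + C ω * X 1 ^ 2 + C ω * X 2 ^ 2 with h9
  set A10 : MvPolynomial (Fin 3) ℂ := X 0 ^ 2 + (1 + C ω) * (X 0 * X 1 + X 0 * X 2 + C ω * (X 1 * X 2)) + C ω ^ 2 * (X 1 ^ 2 + X 2 ^ 2) with h10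
  set A11 : MvPolynomial (Fin 3) ℂ := 1 * X 0 ^ 2 - X 1 * X 2 with h11
  set A12 : MvPolynomial (Fin 3) ℂ := X 0 ^ 2 + (1 + 1) * (X 0 * X 1 + X 0 * X 2 + X 1 * X 2) + X 1 ^ 2 + X 2 ^ 2 with h12
  have factor1 : ∀ u v w : MvPolynomial (Fin 3) ℂ, u * v * w * ((u ^ 3 + v ^ 3 + w ^ 3) ^ 3 - 27 * (u ^ 3 * v ^ 3 * w ^ 3)) = u * v * w * ((u ^ 3 + v ^ 3 + w ^ 3 - 3 * (u * v * w)) * ((u ^ 3 + v ^ 3 + w ^ 3 - 3 * C ω * (u * v * w)) * (u ^ 3 + v ^ 3 + w ^ 3 - 3 * C ω ^ 2 * (u * v * w)))) := by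
    intro u v w
    linear_combination (u * v * w * (3 * (u ^ 3 + v ^ 3 + w ^ 3) ^ 2 * (u * v * w) - 9 * C ω * (u ^ 3 + v ^ 3 + w ^ 3) * (u * v * w) ^ 2 + 27 * (C ω - 1) * (u * v * w) ^ 3)) * hC
  have factor2a : ∀ u v w : MvPolynomial (Fin 3) ℂ, u ^ 3 + v ^ 3 + w ^ 3 - 3 * (u * v * w) = (u + v + w) * ((u + C ω * v + C ω ^ 2 * w) * (u + C ω ^ 2 * v + C ω * w)) := by
    intro u v w
    linear_combination (w ^ 3 + v ^ 3 + (-3) * u * v * w + (-1) * u ^ 2 * w + (-1) * u ^ 2 * v + (-1) * C ω * w ^ 3 + (-1) * C ω * v ^ 3 + (-1) * C ω * u * w ^ 2 + C ω * u * v * w + (-1) * C ω * u * v ^ 2 + (-1) * C ω ^ 2 * v * w ^ 2 + (-1) * C ω ^ 2 * v ^ 2 * w + (-1) * C ω ^ 2 * u * v * w) * hC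
  have factor2b : ∀ u v w : MvPolynomial (Fin 3) ℂ, u ^ 3 + v ^ 3 + w ^ 3 - 3 * C ω * (u * v * w) = (u + v + C ω * w) * ((u + C ω * v + w) * (u + C ω ^ 2 * v + C ω ^ 2 * w)) := by
    intro u v w
    linear_combination (w ^ 3 + v ^ 3 + (-1) * u * v * w + (-1) * u ^ 2 * w + (-1) * u ^ 2 * v + (-1) * C ω * w ^ 3 + (-1) * C ω * v ^ 3 + (-1) * C ω * u * w ^ 2 + (-2) * C ω * u * v * w + (-1) * C ω * u * v ^ 2 + (-1) * C ω ^ 2 * v * w ^ 2 + (-1) * C ω ^ 2 * v ^ 2 * w) * hC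
  have factor2c : ∀ u v w : MvPolynomial (Fin 3) ℂ, u ^ 3 + v ^ 3 + w ^ 3 - 3 * C ω ^ 2 * (u * v * w) = (u + v + C ω ^ 2 * w) * ((u + C ω * v + C ω * w) * (u + C ω ^ 2 * v + w)) := by
    intro u v w
    linear_combination (w ^ 3 + v ^ 3 + (-1) * u * v * w + (-1) * u ^ 2 * w + (-1) * u ^ 2 * v + (-1) * C ω * w ^ 3 + (-1) * C ω * v * w ^ 2 + (-1) * C ω * v ^ 2 * w + (-1) * C ω * v ^ 3 + (-1) * C ω * u * w ^ 2 + (-1) * C ω * u * v * w + (-1) * C ω * u * v ^ 2 + C ω ^ 2 * v * w ^ 2 + C ω ^ 2 * v ^ 2 * w + (-1) * C ω ^ 2 * u * v * w + (-1) * C ω ^ 3 * v * w ^ 2 + (-1) * C ω ^ 3 * v ^ 2 * w) * hC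
  have hUVW : ((X 0 + C ω ^ 2 * X 1 + C ω * X 2) * (X 0 + X 1 + X 2)) * ((X 0 + C ω * X 1 + C ω ^ 2 * X 2) * (X 0 + X 1 + X 2)) * ((X 0 + C ω * X 1 + C ω ^ 2 * X 2) * (X 0 + C ω ^ 2 * X 1 + C ω * X 2)) = A1 * A2 * A12 := by
    rw [h1, h2, h12]
    linear_combination ((-4) * X 1 ^ 2 * X 2 ^ 4 + (-8) * X 1 ^ 3 * X 2 ^ 3 + (-4) * X 1 ^ 4 * X 2 ^ 2 + (-8) * X 0 * X 1 ^ 2 * X 2 ^ 3 + (-8) * X 0 * X 1 ^ 3 * X 2 ^ 2 + (-4) * X 0 ^ 2 * X 1 * X 2 ^ 3 + (-12) * X 0 ^ 2 * X 1 ^ 2 * X 2 ^ 2 + (-4) * X 0 ^ 2 * X 1 ^ 3 * X 2 + (-8) * X 0 ^ 3 * X 1 * X 2 ^ 2 + (-8) * X 0 ^ 3 * X 1 ^ 2 * X 2 + (-4) * X 0 ^ 4 * X 1 * X 2 + (-2) * C ω * X 1 * X 2 ^ 5 + (4) * C ω * X 1 ^ 3 * X 2 ^ 3 + (-2) * C ω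 * X 1 ^ 5 * X 2 + (-8) * C ω * X 0 * X 1 * X 2 ^ 4 + (-8) * C ω * X 0 * X 1 ^ 2 * X 2 ^ 3 + (-8) * C ω * X 0 * X 1 ^ 3 * X 2 ^ 2 + (-8) * C ω * X 0 * X 1 ^ 4 * X 2 + (-1) * C ω * X 0 ^ 2 * X 2 ^ 4 + (-8) * C ω * X 0 ^ 2 * X 1 * X 2 ^ 3 + (-6) * C ω * X 0 ^ 2 * X 1 ^ 2 * X 2 ^ 2 + (-8) * C ω * X 0 ^ 2 * X 1 ^ 3 * X 2 + (-1) * C ω * X 0 ^ 2 * X 1 ^ 4 + (-2) * C ω * X 0 ^ 3 * X 2 ^ 3 + (2) * C ω * X 0 ^ 3 * X 1 * X 2 ^ 2 + (2) * C ω * X 0 ^ 3 * X 1 ^ 2 * X 2 + (-2) * C ω * X 0 ^ 3 * X 1 ^ 3 + (-1) * C ω * X 0 ^ 4 * X 2 ^ 2 + (4) * C ω * X 0 ^ 4 * X 1 * X 2 + (-1) * C ω * X 0 ^ 4 * X 1 ^ 2 + (-1) * C ω ^ 2 * X 1 ^ 2 * X 2 ^ 4 + (-2) * C ω ^ 2 *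 X 1 ^ 3 * X 2 ^ 3 + (-1) * C ω ^ 2 * X 1 ^ 4 * X 2 ^ 2 + (-2) * C ω ^ 2 * X 0 * X 2 ^ 5 + (-4) * C ω ^ 2 * X 0 * X 1 * X 2 ^ 4 + (-4) * C ω ^ 2 * X 0 * X 1 ^ 2 * X 2 ^ 3 + (-4) * C ω ^ 2 * X 0 * X 1 ^ 3 * X 2 ^ 2 + (-4) * C ω ^ 2 * X 0 * X 1 ^ 4 * X 2 + (-2) * C ω ^ 2 * X 0 * X 1 ^ 5 + (-3) * C ω ^ 2 * X 0 ^ 2 * X 2 ^ 4 + (-2) * C ω ^ 2 * X 0 ^ 2 * X 1 * X 2 ^ 3 + (1) * C ω ^ 2 * X 0 ^ 2 * X 1 ^ 2 * X 2 ^ 2 + (-2) * C ω ^ 2 * X 0 ^ 2 * X 1 ^ 3 * X 2 + (-3) * C ω ^ 2 * X 0 ^ 2 * X 1 ^ 4 + (2) * C ω ^ 2 * X 0 ^ 3 * X 1 * X 2 ^ 2 + (2) * C ω ^ 2 * X 0 ^ 3 * X 1 ^ 2 * X 2 + (1) * C ω ^ 2 * X 0 ^ 4 * X 2 ^ 2 +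 (1) * C ω ^ 2 * X 0 ^ 4 * X 1 ^ 2 + (-1) * C ω ^ 3 * X 2 ^ 6 + (-2) * C ω ^ 3 * X 1 ^ 3 * X 2 ^ 3 + (-1) * C ω ^ 3 * X 1 ^ 6 + (8) * C ω ^ 3 * X 0 * X 1 * X 2 ^ 4 + (6) * C ω ^ 3 * X 0 * X 1 ^ 2 * X 2 ^ 3 + (6) * C ω ^ 3 * X 0 * X 1 ^ 3 * X 2 ^ 2 + (8) * C ω ^ 3 * X 0 * X 1 ^ 4 * X 2 + (3) * C ω ^ 3 * X 0 ^ 2 * X 2 ^ 4 + (10) * C ω ^ 3 * X 0 ^ 2 * X 1 * X 2 ^ 3 + (5) * C ω ^ 3 * X 0 ^ 2 * X 1 ^ 2 * X 2 ^ 2 + (10) * C ω ^ 3 * X 0 ^ 2 * X 1 ^ 3 * X 2 + (3) * C ω ^ 3 * X 0 ^ 2 * X 1 ^ 4 + (2) * C ω ^ 3 * X 0 ^ 3 * X 2 ^ 3 + (2) * C ω ^ 3 * X 0 ^ 3 * X 1 * X 2 ^ 2 + (2) * C ω ^ 3 * X 0 ^ 3 * X 1 ^ 2 * X 2 + (2)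 * C ω ^ 3 * X 0 ^ 3 * X 1 ^ 3 + (1) * C ω ^ 4 * X 2 ^ 6 + (1) * C ω ^ 4 * X 1 ^ 2 * X 2 ^ 4 + (4) * C ω ^ 4 * X 1 ^ 3 * X 2 ^ 3 + (1) * C ω ^ 4 * X 1 ^ 4 * X 2 ^ 2 + (1) * C ω ^ 4 * X 1 ^ 6 + (2) * C ω ^ 4 * X 0 * X 2 ^ 5 + (10) * C ω ^ 4 * X 0 * X 1 ^ 2 * X 2 ^ 3 + (10) * C ω ^ 4 * X 0 * X 1 ^ 3 * X 2 ^ 2 + (2) * C ω ^ 4 * X 0 * X 1 ^ 5 + (1) * C ω ^ 4 * X 0 ^ 2 * X 2 ^ 4 + (2) * C ω ^ 4 * X 0 ^ 2 * X 1 * X 2 ^ 3 + (12) * C ω ^ 4 * X 0 ^ 2 * X 1 ^ 2 * X 2 ^ 2 + (2) * C ω ^ 4 * X 0 ^ 2 * X 1 ^ 3 * X 2 + (1) * C ω ^ 4 * X 0 ^ 2 * X 1 ^ 4 + (2) * C ω ^ 4 * X 0 ^ 3 * X 1 * X 2 ^ 2 + (2) * C ω ^ 4 * X 0 ^ 3 *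 X 1 ^ 2 * X 2 + (2) * C ω ^ 5 * X 1 * X 2 ^ 5 + (3) * C ω ^ 5 * X 1 ^ 2 * X 2 ^ 4 + (2) * C ω ^ 5 * X 1 ^ 3 * X 2 ^ 3 + (3) * C ω ^ 5 * X 1 ^ 4 * X 2 ^ 2 + (2) * C ω ^ 5 * X 1 ^ 5 * X 2 + (4) * C ω ^ 5 * X 0 * X 1 * X 2 ^ 4 + (2) * C ω ^ 5 * X 0 * X 1 ^ 2 * X 2 ^ 3 + (2) * C ω ^ 5 * X 0 * X 1 ^ 3 * X 2 ^ 2 + (4) * C ω ^ 5 * X 0 * X 1 ^ 4 * X 2 + (2) * C ω ^ 5 * X 0 ^ 2 * X 1 * X 2 ^ 3 + (-1) * C ω ^ 5 * X 0 ^ 2 * X 1 ^ 2 * X 2 ^ 2 + (2) * C ω ^ 5 * X 0 ^ 2 * X 1 ^ 3 * X 2 + (1) * C ω ^ 6 * X 1 ^ 2 * X 2 ^ 4 + (2) * C ω ^ 6 * X 1 ^ 3 * X 2 ^ 3 + (1) * C ω ^ 6 * X 1 ^ 4 * X 2 ^ 2 + (2) * C ω ^ 6 * X 0 * X 1 ^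 2 * X 2 ^ 3 + (2) * C ω ^ 6 * X 0 * X 1 ^ 3 * X 2 ^ 2 + (1) * C ω ^ 6 * X 0 ^ 2 * X 1 ^ 2 * X 2 ^ 2) * hC
  have hq3 : (X 0 + C ω ^ 2 * X 1 + C ω * X 2) * (X 0 + X 1 + X 2) + ((X 0 + C ω * X 1 + C ω ^ 2 * X 2) * (X 0 + X 1 + X 2)) + ((X 0 + C ω * X 1 + C ω ^ 2 * X 2) * (X 0 + C ω ^ 2 * X 1 + C ω * X 2)) = 3 * A11 := by
    rw [h11]
    linear_combination ((3) * X 1 * X 2 + (2) * X 0 * X 2 + (2) * X 0 * X 1 + (1) * C ω * X 2 ^ 2 + (-1) * C ω * X 1 * X 2 + (1) * C ω * X 1 ^ 2 + (1) * C ω ^ 2 * X 1 * X 2) * hC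
  have hq4 : (X 0 + C ω ^ 2 * X 1 + C ω * X 2) * (X 0 + X 1 + X 2) + C ω * ((X 0 + C ω * X 1 + C ω ^ 2 * X 2) * (X 0 + X 1 + X 2)) + C ω ^ 2 * ((X 0 + C ω * X 1 + C ω ^ 2 * X 2) * (X 0 + C ω ^ 2 * X 1 + C ω * X 2)) = (3 + 3 * C ω) * A7 := by
    rw [h7]
    linear_combination ((3) * X 1 ^ 2 + (-2) * X 0 * X 2 + (1) * X 0 * X 1 + (1) * X 0 ^ 2 + (1) * C ω * X 2 ^ 2 + (1) * C ω * X 1 * X 2 + (1) * C ω * X 0 * X 2 + (-1) * C ω ^ 2 * X 2 ^ 2 + (1) * C ω ^ 2 * X 1 * X 2 + (-1) * C ω ^ 2 * X 1 ^ 2 + (1) * C ω ^ 2 * X 0 * X 2 + (1) * C ω ^ 2 * X 0 * X 1 + (1) * C ω ^ 3 * X 2 ^ 2 + (-1) * C ω ^ 3 * X 1 * X 2 + (1) * C ω ^ 3 * X 1 ^ 2 + (1) * C ω ^ 4 * X 1 * X 2) * hC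
  have hq5 : (X 0 + C ω ^ 2 * X 1 + C ω * X 2) * (X 0 + X 1 + X 2) + C ω ^ 2 * ((X 0 + C ω * X 1 + C ω ^ 2 * X 2) * (X 0 + X 1 + X 2)) + C ω * ((X 0 + C ω * X 1 + C ω ^ 2 * X 2) * (X 0 + C ω ^ 2 * X 1 + C ω * X 2)) = (-3 * C ω) * A3 := by
    rw [h3]
    linear_combination ((1) * X 0 * X 2 + (1) * X 0 * X 1 + (1) * X 0 ^ 2 + (-2) * C ω * X 2 ^ 2 + (1) * C ω * X 1 * X 2 + (2) * C ω * X 0 * X 1 + (2) * C ω ^ 2 * X 2 ^ 2 + (1) * C ω ^ 2 * X 1 ^ 2 + (1) * C ω ^ 2 * X 0 * X 2 + (1) * C ω ^ 3 * X 1 * X 2) * hC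
  have hq6 : (X 0 + C ω ^ 2 * X 1 + C ω * X 2) * (X 0 + X 1 + X 2) + ((X 0 + C ω * X 1 + C ω ^ 2 * X 2) * (X 0 + X 1 + X 2)) + C ω * ((X 0 + C ω * X 1 + C ω ^ 2 * X 2) * (X 0 + C ω ^ 2 * X 1 + C ω * X 2)) = (2 + C ω) * A9 := by
    rw [h9]
    linear_combination ((-1) * C ω * X 2 ^ 2 + (2) * C ω * X 1 * X 2 + (-1) * C ω * X 1 ^ 2 + (1) * C ω ^ 2 * X 2 ^ 2 + (-2) * C ω ^ 2 * X 1 * X 2 + (1) * C ω ^ 2 * X 1 ^ 2) * hC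
  have hq7 : (X 0 + C ω ^ 2 * X 1 + C ω * X 2) * (X 0 + X 1 + X 2) + C ω * ((X 0 + C ω * X 1 + C ω ^ 2 * X 2) * (X 0 + X 1 + X 2)) + ((X 0 + C ω * X 1 + C ω ^ 2 * X 2) * (X 0 + C ω ^ 2 * X 1 + C ω * X 2)) = (2 + C ω) * A8 := by
    rw [h8]
    linear_combination ((-2) * X 2 ^ 2 + (1) * X 0 * X 2 + (1) * X 0 * X 1 + (2) * C ω * X 2 ^ 2 + (-1) * C ω * X 1 * X 2 + (2) * C ω * X 0 * X 2 + (-1) * C ω * X 0 * X 1 + (1) * C ω ^ 2 * X 1 * X 2 + (-2) * C ω ^ 2 * X 0 * X 2 + (-1) * C ω ^ 3 * X 0 * X 2) * hC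
  have hq8 : (X 0 + C ω ^ 2 * X 1 + C ω * X 2) * (X 0 + X 1 + X 2) + C ω ^ 2 * ((X 0 + C ω * X 1 + C ω ^ 2 * X 2) * (X 0 + X 1 + X 2)) + C ω ^ 2 * ((X 0 + C ω * X 1 + C ω ^ 2 * X 2) * (X 0 + C ω ^ 2 * X 1 + C ω * X 2)) = (-1 - 2 * C ω) * A4 := by
    rw [h4]
    linear_combination ((1) * X 1 ^ 2 + (1) * X 0 * X 2 + (2) * X 0 * X 1 + (2) * X 0 ^ 2 + (1) * C ω * X 2 ^ 2 + (2) * C ω * X 1 * X 2 + (1) * C ω * X 1 ^ 2 + (1) * C ω * X 0 * X 2 + (1) * C ω * X 0 * X 1 + (2) * C ω ^ 2 * X 1 * X 2 + (-1) * C ω ^ 2 * X 1 ^ 2 + (2) * C ω ^ 2 * X 0 * X 2 + (1) * C ω ^ 2 * X 0 * X 1 + (1) * C ω ^ 3 * X 2 ^ 2 + (-1) * C ω ^ 3 * X 1 * X 2 + (1) * C ω ^ 3 * X 1 ^ 2 + (1) * C ω ^ 4 * X 1 * X 2) * hC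
  have hq9 : (X 0 + C ω ^ 2 * X 1 + C ω * X 2) * (X 0 + X 1 + X 2) + ((X 0 + C ω * X 1 + C ω ^ 2 * X 2) * (X 0 + X 1 + X 2)) + C ω ^ 2 * ((X 0 + C ω * X 1 + C ω ^ 2 * X 2) * (X 0 + C ω ^ 2 * X 1 + C ω * X 2)) = (1 - C ω) * A10 := by
    rw [h10]
    linear_combination ((1) * X 0 * X 2 + (1) * X 0 * X 1 + (1) * X 0 ^ 2 + (1) * C ω * X 2 ^ 2 + (1) * C ω * X 1 * X 2 + (1) * C ω * X 1 ^ 2 + (-1) * C ω ^ 2 * X 2 ^ 2 + (1) * C ω ^ 2 * X 1 * X 2 + (-1) * C ω ^ 2 * X 1 ^ 2 + (1) * C ω ^ 2 * X 0 * X 2 + (1) * C ω ^ 2 * X 0 * X 1 + (1) * C ω ^ 3 * X 2 ^ 2 + (-1) * C ω ^ 3 * X 1 * X 2 + (1) * C ω ^ 3 * X 1 ^ 2 + (1) * C ω ^ 4 * X 1 * X 2) * hC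
  have hq10 : (X 0 + C ω ^ 2 * X 1 + C ω * X 2) * (X 0 + X 1 + X 2) + C ω * ((X 0 + C ω * X 1 + C ω ^ 2 * X 2) * (X 0 + X 1 + X 2)) + C ω * ((X 0 + C ω * X 1 + C ω ^ 2 * X 2) * (X 0 + C ω ^ 2 * X 1 + C ω * X 2)) = (1 + 2 * C ω) * A6 := by
    rw [h6]
    linear_combination ((-1) * X 2 ^ 2 + (1) * X 0 * X 2 + (1) * X 0 * X 1 + (-1) * C ω * X 1 ^ 2 + (1) * C ω * X 0 * X 2 + (-1) * C ω * X 0 * X 1 + (1) * C ω ^ 2 * X 2 ^ 2 + (-1) * C ω ^ 2 * X 1 * X 2 + (1) * C ω ^ 2 * X 1 ^ 2 + (-2) * C ω ^ 2 * X 0 * X 2 + (1) * C ω ^ 3 * X 1 * X 2) * hC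
  have hq11 : (X 0 + C ω ^ 2 * X 1 + C ω * X 2) * (X 0 + X 1 + X 2) + C ω ^ 2 * ((X 0 + C ω * X 1 + C ω ^ 2 * X 2) * (X 0 + X 1 + X 2)) + ((X 0 + C ω * X 1 + C ω ^ 2 * X 2) * (X 0 + C ω ^ 2 * X 1 + C ω * X 2)) = (1 - C ω) * A5 := by
    rw [h5]
    linear_combination ((-1) * X 1 ^ 2 + (1) * X 0 * X 2 + (1) * X 0 ^ 2 + (1) * C ω * X 1 * X 2 + (2) * C ω * X 1 ^ 2 + (1) * C ω * X 0 * X 2 + (2) * C ω * X 0 * X 1 + (1) * C ω ^ 2 * X 2 ^ 2 + (-1) * C ω ^ 2 * X 0 * X 2 + (1) * C ω ^ 3 * X 1 * X 2 + (1) * C ω ^ 3 * X 0 * X 2) * hC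
  rw [factor1, factor2a, factor2b, factor2c, hUVW, hq3, hq4, hq5, hq6, hq7, hq8, hq9, hq10, hq11]
  clear_value A1 A2 A3 A4 A5 A6 A7 A8 A9 A10 A11 A12
  linear_combination (C ((729:ℂ)⁻¹) * (A1 * A2 * A3 * A4 * A5 * A6 * A7 * A8 * A9 * A10 * A11 * A12) * (729 - 837 * C ω - 324 * C ω ^ 2 + 918 * C ω ^ 3 + 189 * C ω ^ 4 - 324 * C ω ^ 5 - 108 * C ω ^ 6)) * hC - (A1 * A2 * A3 * A4 * A5 * A6 * A7 * A8 * A9 * A10 * A11 * A12) * hc
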